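/- Let I = (𝔼, D, c, f) be a CMP instance whose objective f is of type bottleneck, and let E = {e_1,…,e_k} ⊆ 𝔼. Then l'(I,E) = Σ_{l=1}^k l'(I,e_l). -/
import Mathlib


open scoped ENNReal BigOperators

/-- Objective type of a combinatorial minimization problem:
sum, product, or bottleneck. -/
inductive ObjType where
  | sum : ObjType
  | prod : ObjType
  | bottleneck : ObjType
deriving DecidableEq

/-- The cost `f_c(S)` of a feasible solution `S` under cost function `c`:
the sum, the product, or the maximum (for nonempty `S`) of the element costs. -/
noncomputable def objCost {ι : Type*} (t : ObjType) (c : ι → ℝ) (S : Finset ι) : ℝ :=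
  match t with
  | ObjType.sum => ∑ e ∈ S, c e
  | ObjType.prod => ∏ e ∈ S, c e
  | ObjType.bottleneck => if h : S.Nonempty then S.sup' h c else 0

/-- The optimal objective value `f(I)` of the instance with feasible set `D`. -/
noncomputable def optVal {ι : Type*} (t : ObjType) (c : ι → ℝ) (D : Finset (Finset ι)) : ℝ :=
  if h : D.Nonempty then D.inf' h (objCost t c) else 0

/-- `S` is an optimal solution of the instance `(𝔼, D, c, f)`. -/
def isOpt {ι : Type*} (t : ObjType) (c : ι → ℝ) (D : Finset (Finset ι)) (S : Finset ι) : Prop :=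
  S ∈ D ∧ objCost t c S = optVal t c D

/-- `0 ≤ a < maxdec(e)`, where `maxdec(e) = ∞` for sum/bottleneck objectives and
`maxdec(e) = c(e)` for the product objective. -/
def decOK {ι : Type*} (t : ObjType) (c : ι → ℝ) (e : ι) (a : ℝ) : Prop :=
  0 ≤ a ∧ (t = ObjType.prod → a < c e)

/-- Extended single upper tolerance
`u'(I,e) = sup {α ≥ 0 : every optimal solution of I is optimal for I_{α,e}}` valued in `[0,∞]`. -/
noncomputable def uTol {ι : Type*} [DecidableEq ι] (t : ObjType) (c : ι → ℝ)
    (D : Finset (Finset ι)) (e : ι) : ℝ≥0∞ :=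
  sSup (ENNReal.ofReal '' {a : ℝ | 0 ≤ a ∧
    ∀ S : Finset ι, isOpt t c D S →
      isOpt t (fun x => if x = e then c x + a else c x) D S})

/-- Extended regular set upper tolerance `u'(I,E)`, valued in `[0,∞]`. -/
noncomputable def uTolSet {ι : Type*} [DecidableEq ι] (t : ObjType) (c : ι → ℝ)
    (D : Finset (Finset ι)) (E : Finset ι) : ℝ≥0∞ :=
  sSup (ENNReal.ofReal '' {a : ℝ |
    ∀ S : Finset ι, isOpt t c D S →
      ∃ α : ι → ℝ, (∀ x, 0 ≤ α x) ∧ (∀ x ∉ E, α x = 0) ∧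
        a = ∑ x ∈ E, α x ∧ isOpt t (fun x => c x + α x) D S})

/-- Extended reverse set upper tolerance `u_b'(I,E)`, valued in `[0,∞]` (`inf ∅ = ∞`). -/
noncomputable def uTolSetRev {ι : Type*} [DecidableEq ι] (t : ObjType) (c : ι → ℝ)
    (D : Finset (Finset ι)) (E : Finset ι) : ℝ≥0∞ :=
  sInf (ENNReal.ofReal '' {a : ℝ |
    ∃ S : Finset ι, isOpt t c D S ∧
      ∃ α : ι → ℝ, (∀ x, 0 ≤ α x) ∧ (∀ x ∉ E, α x = 0) ∧
        a = ∑ x ∈ E, α x ∧ ¬ isOpt t (fun x => c x + α x) D S})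

/-- New single lower tolerance
`l'(I,e) = sup {α : 0 ≤ α < maxdec(e), f(I_{−α,e}) = f(I)}`, valued in `[0,∞]`. -/
noncomputable def lTol {ι : Type*} [DecidableEq ι] (t : ObjType) (c : ι → ℝ)
    (D : Finset (Finset ι)) (e : ι) : ℝ≥0∞ :=
  sSup (ENNReal.ofReal '' {a : ℝ | decOK t c e a ∧
    optVal t (fun x => if x = e then c x - a else c x) D = optVal t c D})

/-- New regular set lower tolerance `l'(I,E)`, valued in `[0,∞]`. -/
noncomputable def lTolSet {ι : Type*} [DecidableEq ι] (t : ObjType) (c : ι → ℝ)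
    (D : Finset (Finset ι)) (E : Finset ι) : ℝ≥0∞ :=
  sSup (ENNReal.ofReal '' {a : ℝ |
    ∃ α : ι → ℝ, (∀ x ∈ E, decOK t c x (α x)) ∧ (∀ x ∉ E, α x = 0) ∧
      a = ∑ x ∈ E, α x ∧ optVal t (fun x => c x - α x) D = optVal t c D})

/-- New reverse set lower tolerance `l_b'(I,E)`, valued in `[0,∞]` (`inf ∅ = ∞`). -/
noncomputable def lTolSetRev {ι : Type*} [DecidableEq ι] (t : ObjType) (c : ι → ℝ)
    (D : Finset (Finset ι)) (E : Finset ι) : ℝ≥0∞ :=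
  sInf (ENNReal.ofReal '' {a : ℝ |
    ∃ α : ι → ℝ, (∀ x ∈ E, decOK t c x (α x)) ∧ (∀ x ∉ E, α x = 0) ∧
      a = ∑ x ∈ E, α x ∧ optVal t (fun x => c x - α x) D < optVal t c D})



section Aux
set_option linter.unusedSectionVars false

variable {ι : Type*} [Fintype ι] [DecidableEq ι]

lemma objCost_bn (c : ι → ℝ) {S : Finset ι} (h : S.Nonempty) :
    objCost ObjType.bottleneck c S = S.sup' h c := by
  simp [objCost, h]

lemma optVal_bn (c : ι → ℝ) {D : Finset (Finset ι)} (hD : D.Nonempty) :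
    optVal ObjType.bottleneck c D = D.inf' hD (objCost ObjType.bottleneck c) := by
  simp [optVal, hD]

lemma f_le_objCost (c : ι → ℝ) {D : Finset (Finset ι)} (hD : D.Nonempty)
    {S : Finset ι} (hS : S ∈ D) :
    optVal ObjType.bottleneck c D ≤ objCost ObjType.bottleneck c S := by
  rw [optVal_bn c hD]; exact Finset.inf'_le _ hS

lemma decOK_bn (c : ι → ℝ) (e : ι) (a : ℝ) :
    decOK ObjType.bottleneck c e a ↔ 0 ≤ a := by
  constructor
  · exact fun h => h.1
  · exact fun h => ⟨h, fun h' => by cases h'⟩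

/-- Characterization: the perturbed optimum stays equal iff every feasible set
still has cost at least the old optimum. -/
lemma optVal_eq_iff (c c' : ι → ℝ) (hc' : ∀ x, c' x ≤ c x)
    {D : Finset (Finset ι)} (hD : D.Nonempty) (hSne : ∀ S ∈ D, S.Nonempty) :
    optVal ObjType.bottleneck c' D = optVal ObjType.bottleneck c D ↔
      ∀ S ∈ D, optVal ObjType.bottleneck c D ≤ objCost ObjType.bottleneck c' S := by
  constructor
  · intro h S hS
    rw [← h]; exact f_le_objCost c' hD hS
  · intro h
    apply le_antisymm
    · obtain ⟨S0, hS0, hEq⟩ := Finset.exists_mem_eq_inf' hD (objCost ObjType.bottleneck c)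
      have hne := hSne S0 hS0
      calc optVal ObjType.bottleneck c' D ≤ objCost ObjType.bottleneck c' S0 :=
            f_le_objCost c' hD hS0
        _ ≤ objCost ObjType.bottleneck c S0 := by
            rw [objCost_bn c' hne, objCost_bn c hne]
            exact Finset.sup'_mono_fun (fun b _ => hc' b)
        _ = optVal ObjType.bottleneck c D := by rw [optVal_bn c hD, hEq]
    · rw [optVal_bn c' hD]; exact Finset.le_inf' _ _ h

/-- Every feasible set contains an element of cost at least the optimum. -/
lemma exists_ge_f (c : ι → ℝ) {D : Finset (Finset ι)} (hD : D.Nonempty)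
    (hSne : ∀ S ∈ D, S.Nonempty) {S : Finset ι} (hS : S ∈ D) :
    ∃ x ∈ S, optVal ObjType.bottleneck c D ≤ c x := by
  have h := f_le_objCost c hD hS
  rw [objCost_bn c (hSne S hS), Finset.le_sup'_iff] at h
  exact h

/-- `P c D e` : there is a feasible set where `e` is the unique element of cost `≥ f(I)`. -/
def Pbind (c : ι → ℝ) (D : Finset (Finset ι)) (e : ι) : Prop :=
  ∃ S ∈ D, e ∈ S ∧ ∀ x ∈ S, x ≠ e → c x < optVal ObjType.bottleneck c D

lemma Pbind_ce_ge (c : ι → ℝ) {D : Finset (Finset ι)} (hD : D.Nonempty)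
    (hSne : ∀ S ∈ D, S.Nonempty) {e : ι} (hP : Pbind c D e) :
    optVal ObjType.bottleneck c D ≤ c e := by
  obtain ⟨S, hS, heS, hlt⟩ := hP
  obtain ⟨x, hxS, hx⟩ := exists_ge_f c hD hSne hS
  by_cases hxe : x = e
  · rwa [hxe] at hx
  · exact absurd hx (not_le.mpr (hlt x hxS hxe))

lemma lTol_of_Pbind (c : ι → ℝ) {D : Finset (Finset ι)} (hD : D.Nonempty)
    (hSne : ∀ S ∈ D, S.Nonempty) {e : ι} (hP : Pbind c D e) :
    lTol ObjType.bottleneck c D e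
      = ENNReal.ofReal (c e - optVal ObjType.bottleneck c D) := by
  set f := optVal ObjType.bottleneck c D with hf
  have hce : f ≤ c e := Pbind_ce_ge c hD hSne hP
  have hset : {a : ℝ | decOK ObjType.bottleneck c e a ∧
      optVal ObjType.bottleneck (fun x => if x = e then c x - a else c x) D
        = optVal ObjType.bottleneck c D} = Set.Icc 0 (c e - f) := by
    ext a
    simp only [Set.mem_setOf_eq, Set.mem_Icc, decOK_bn]
    constructor
    · rintro ⟨ha0, hopt⟩
      refine ⟨ha0, ?_⟩
      have hle : ∀ x, (if x = e then c x - a else c x) ≤ c x := by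
        intro x; split <;> linarith
      rw [optVal_eq_iff c _ hle hD hSne] at hopt
      obtain ⟨S, hS, heS, hlt⟩ := hP
      have h := hopt S hS
      rw [objCost_bn _ (hSne S hS), Finset.le_sup'_iff] at h
      obtain ⟨x, hxS, hx⟩ := h
      by_cases hxe : x = e
      · subst hxe; rw [if_pos rfl] at hx; linarith
      · rw [if_neg hxe] at hx
        exact absurd hx (not_le.mpr (hlt x hxS hxe))
    · rintro ⟨ha0, ha1⟩
      refine ⟨ha0, ?_⟩
      have hle : ∀ x, (if x = e then c x - a else c x) ≤ c x := by
        intro x; split <;> linarith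
      rw [optVal_eq_iff c _ hle hD hSne]
      intro S hS
      rw [objCost_bn _ (hSne S hS), Finset.le_sup'_iff]
      by_cases heS : e ∈ S
      · exact ⟨e, heS, by rw [if_pos rfl]; linarith⟩
      · obtain ⟨x, hxS, hx⟩ := exists_ge_f c hD hSne hS
        have hxe : x ≠ e := fun h => heS (h ▸ hxS)
        exact ⟨x, hxS, by rw [if_neg hxe]; exact hx⟩
  rw [lTol, hset]
  apply le_antisymm
  · apply sSup_le
    rintro b ⟨a, ⟨_, ha⟩, rfl⟩
    exact ENNReal.ofReal_le_ofReal ha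
  · exact le_sSup ⟨c e - f, ⟨by linarith, le_refl _⟩, rfl⟩

lemma lTol_of_not_Pbind (c : ι → ℝ) {D : Finset (Finset ι)} (hD : D.Nonempty)
    (hSne : ∀ S ∈ D, S.Nonempty) {e : ι} (hP : ¬ Pbind c D e) :
    lTol ObjType.bottleneck c D e = ⊤ := by
  set f := optVal ObjType.bottleneck c D with hf
  rw [Pbind] at hP
  push_neg at hP
  have hmem : ∀ a : ℝ, 0 ≤ a → a ∈ {a : ℝ | decOK ObjType.bottleneck c e a ∧
      optVal ObjType.bottleneck (fun x => if x = e then c x - a else c x) D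
        = optVal ObjType.bottleneck c D} := by
    intro a ha0
    refine ⟨(decOK_bn c e a).mpr ha0, ?_⟩
    have hle : ∀ x, (if x = e then c x - a else c x) ≤ c x := by
      intro x; split <;> linarith
    rw [optVal_eq_iff c _ hle hD hSne]
    intro S hS
    rw [objCost_bn _ (hSne S hS), Finset.le_sup'_iff]
    by_cases heS : e ∈ S
    · obtain ⟨x, hxS, hxe, hx⟩ := hP S hS heS
      exact ⟨x, hxS, by rw [if_neg hxe]; exact hx⟩
    · obtain ⟨x, hxS, hx⟩ := exists_ge_f c hD hSne hS
      have hxe : x ≠ e := fun h => heS (h ▸ hxS)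
      exact ⟨x, hxS, by rw [if_neg hxe]; exact hx⟩
  rw [lTol, sSup_eq_top]
  intro b hb
  refine ⟨ENNReal.ofReal (max 0 b.toReal + 1),
    ⟨max 0 b.toReal + 1, hmem _ (by positivity), rfl⟩, ?_⟩
  rw [ENNReal.lt_ofReal_iff_toReal_lt hb.ne]
  have := le_max_right 0 b.toReal
  linarith

end Aux

/-- Theorem 6(b): for a bottleneck objective, `l'(I,E) = Σ_{l} l'(I,e_l)`. -/
theorem lrg_eq_sum_bottleneck {ι : Type*} [Fintype ι] [DecidableEq ι]
    (c : ι → ℝ) (D : Finset (Finset ι))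
    (hD : D.Nonempty) (hSne : ∀ S ∈ D, S.Nonempty)
    (E : Finset ι) (hE : E.Nonempty) :
    lTolSet ObjType.bottleneck c D E = ∑ e ∈ E, lTol ObjType.bottleneck c D e := by
  classical
  set f := optVal ObjType.bottleneck c D with hf
  by_cases hP : ∀ e ∈ E, Pbind c D e
  · -- all tolerances finite
    have hRHS : ∑ e ∈ E, lTol ObjType.bottleneck c D e
        = ENNReal.ofReal (∑ e ∈ E, (c e - f)) := by
      rw [ENNReal.ofReal_sum_of_nonneg (fun e he => by
        have := Pbind_ce_ge c hD hSne (hP e he); linarith)]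
      exact Finset.sum_congr rfl (fun e he => lTol_of_Pbind c hD hSne (hP e he))
    rw [hRHS, lTolSet]
    apply le_antisymm
    · apply sSup_le
      rintro b ⟨a, ⟨α, hdec, hzero, rfl, hopt⟩, rfl⟩
      apply ENNReal.ofReal_le_ofReal
      apply Finset.sum_le_sum
      intro e he
      have hα0 : ∀ x, 0 ≤ α x := by
        intro x
        by_cases hx : x ∈ E
        · exact ((decOK_bn c x (α x)).mp (hdec x hx))
        · rw [hzero x hx]
      have hle : ∀ x, c x - α x ≤ c x := fun x => by have := hα0 x; linarith
      rw [optVal_eq_iff c _ hle hD hSne] at hopt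
      obtain ⟨S, hS, heS, hlt⟩ := hP e he
      have h := hopt S hS
      rw [objCost_bn _ (hSne S hS), Finset.le_sup'_iff] at h
      obtain ⟨x, hxS, hx⟩ := h
      by_cases hxe : x = e
      · subst hxe; linarith
      · have := hα0 x
        have := hlt x hxS hxe
        linarith
    · apply le_sSup
      refine ⟨∑ e ∈ E, (c e - f), ⟨fun x => if x ∈ E then c x - f else 0, ?_, ?_, ?_, ?_⟩, rfl⟩
      · intro x hx
        dsimp only
        rw [decOK_bn, if_pos hx]
        have := Pbind_ce_ge c hD hSne (hP x hx); linarith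
      · intro x hx; dsimp only; rw [if_neg hx]
      · exact (Finset.sum_congr rfl (fun x hx => by dsimp only; rw [if_pos hx])).symm
      · have hle : ∀ x, c x - (if x ∈ E then c x - f else 0) ≤ c x := by
          intro x; split
          · have := Pbind_ce_ge c hD hSne (hP x (by assumption)); linarith
          · linarith
        rw [optVal_eq_iff c _ hle hD hSne]
        intro S hS
        rw [objCost_bn _ (hSne S hS), Finset.le_sup'_iff]
        obtain ⟨x, hxS, hx⟩ := exists_ge_f c hD hSne hS
        refine ⟨x, hxS, ?_⟩
        by_cases hxE : x ∈ E
        · rw [if_pos hxE]; linarith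
        · rw [if_neg hxE]; linarith
  · -- some tolerance infinite
    push_neg at hP
    obtain ⟨e0, he0E, he0⟩ := hP
    have hRHS : ∑ e ∈ E, lTol ObjType.bottleneck c D e = ⊤ :=
      ENNReal.sum_eq_top.mpr ⟨e0, he0E, lTol_of_not_Pbind c hD hSne he0⟩
    rw [hRHS, lTolSet, sSup_eq_top]
    intro b hb
    set M : ℝ := max 0 b.toReal + 1 with hM
    have hM0 : 0 ≤ M := by positivity
    rw [Pbind] at he0
    push_neg at he0
    refine ⟨ENNReal.ofReal M, ⟨M, ⟨fun x => if x = e0 then M else 0, ?_, ?_, ?_, ?_⟩, rfl⟩, ?_⟩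
    · intro x _
      dsimp only
      rw [decOK_bn]; split
      · exact hM0
      · exact le_refl 0
    · intro x hx
      dsimp only
      rw [if_neg (fun h : x = e0 => hx (h ▸ he0E))]
    · rw [Finset.sum_ite_eq' E e0 (fun _ => M), if_pos he0E]
    · have hle : ∀ x, c x - (if x = e0 then M else 0) ≤ c x := by
        intro x; split <;> linarith
      rw [optVal_eq_iff c _ hle hD hSne]
      intro S hS
      rw [objCost_bn _ (hSne S hS), Finset.le_sup'_iff]
      by_cases heS : e0 ∈ S
      · obtain ⟨x, hxS, hxe, hx⟩ := he0 S hS heS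
        exact ⟨x, hxS, by rw [if_neg hxe]; linarith⟩
      · obtain ⟨x, hxS, hx⟩ := exists_ge_f c hD hSne hS
        have hxe : x ≠ e0 := fun h => heS (h ▸ hxS)
        exact ⟨x, hxS, by rw [if_neg hxe]; linarith⟩
    · rw [ENNReal.lt_ofReal_iff_toReal_lt hb.ne]
      have := le_max_right 0 b.toReal
      linarith
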